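/- Let m ≥ 1, σ > 0, and let λ_1, ..., λ_m ∈ [0,1] (so λ_k² ≤ 1). Set T := Σ_k (1 − λ_k²)/(1 + λ_k²). Then 2σ Σ_{k=1}^m [2/(1+λ_k²)] · [λ_k²/(1+λ_k²)] · ( Σ_{l=1}^m λ_l²/(1+λ_l²) − λ_k²/(1+λ_k²) ) ≥ (σ/2)(m − T)(m − 1 − T). -/

import Mathlib

open Finset

/-- Full algebraic inequality behind Corollary 4.8: for `λ_k ∈ [0,1]` and
`T = Σ (1−λ_k²)/(1+λ_k²)`,
`2σ Σ_k [2/(1+λ_k²)]·[λ_k²/(1+λ_k²)]·(Σ_l λ_l²/(1+λ_l²) − λ_k²/(1+λ_k²))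
  ≥ (σ/2)(m−T)(m−1−T)`. -/
theorem stmt_5 (m : ℕ) (hm : 1 ≤ m) (σ : ℝ) (hσ : 0 < σ)
    (lam : Fin m → ℝ) (h0 : ∀ k, 0 ≤ lam k) (h1 : ∀ k, lam k ≤ 1) :
    2 * σ * ∑ k, (2 / (1 + lam k ^ 2)) * (lam k ^ 2 / (1 + lam k ^ 2)) *
        ((∑ l, lam l ^ 2 / (1 + lam l ^ 2)) - lam k ^ 2 / (1 + lam k ^ 2)) ≥
      (σ / 2) * ((m : ℝ) - ∑ k, (1 - lam k ^ 2) / (1 + lam k ^ 2)) *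
        ((m : ℝ) - 1 - ∑ k, (1 - lam k ^ 2) / (1 + lam k ^ 2)) := by
  have hd : ∀ k, (0:ℝ) < 1 + lam k ^ 2 := fun k => by positivity
  set a : Fin m → ℝ := fun k => lam k ^ 2 / (1 + lam k ^ 2) with ha
  have ha0 : ∀ k, 0 ≤ a k := fun k => by positivity
  have ha2 : ∀ k, a k ≤ 1/2 := by
    intro k
    rw [ha]
    rw [div_le_iff₀ (hd k)]
    nlinarith [h1 k, h0 k]
  set S : ℝ := ∑ l, a l with hS
  have hSk : ∀ k, a k ≤ S := fun k =>
    Finset.single_le_sum (fun l _ => ha0 l) (mem_univ k)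
  have key : ∀ k, (2 / (1 + lam k ^ 2)) * a k * (S - a k) ≥ a k * S - a k / 2 := by
    intro k
    have h := hd k
    have e : 2 / (1 + lam k ^ 2) = 2 * (1 - a k) := by
      rw [ha]; field_simp; ring
    rw [e]
    have h1 : (0:ℝ) ≤ 1 - 2 * a k := by linarith [ha2 k]
    have h2 : (0:ℝ) ≤ S - a k := by linarith [hSk k]
    nlinarith [mul_nonneg (mul_nonneg (ha0 k) h2) h1, mul_nonneg (ha0 k) h1]
  have hsum : ∑ k, (2 / (1 + lam k ^ 2)) * a k * (S - a k) ≥ S * S - S / 2 := by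
    calc ∑ k, (2 / (1 + lam k ^ 2)) * a k * (S - a k)
        ≥ ∑ k, (a k * S - a k / 2) := Finset.sum_le_sum (fun k _ => key k)
      _ = S * S - S / 2 := by
          rw [Finset.sum_sub_distrib, ← Finset.sum_mul, ← Finset.sum_div]
  have hT : ∑ k, (1 - lam k ^ 2) / (1 + lam k ^ 2) = (m : ℝ) - 2 * S := by
    have e : ∀ k, (1 - lam k ^ 2) / (1 + lam k ^ 2) = 1 - 2 * a k := by
      intro k
      have h := (hd k).ne'
      rw [ha]
      field_simp
      ring
    simp_rw [e]
    rw [Finset.sum_sub_distrib, ← Finset.mul_sum]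
    simp [hS]
  rw [hT]
  nlinarith [hsum, hσ.le]
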